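/- arXiv:2008.07322 — 3 statements merged into one kernel-verified Lean document; each statement's English description precedes it below -/
import Mathlib

section
/- If G is a finite Z-group with nontrivial center, then the cyclic graph Δ(G) is connected with diameter at most 2. -/
/-- A finite commutative Z-group is cyclic. -/
lemma isCyclic_of_comm_zgroup {H : Type*} [CommGroup H] [Finite H] [IsZGroup H] :
    IsCyclic H := by
  apply IsCyclic.of_exponent_eq_card
  refine Nat.dvd_antisymm Group.exponent_dvd_nat_card ?_
  rw [Nat.dvd_iff_prime_pow_dvd_dvd]
  intro p k hp hpk
  have hfact : Fact p.Prime := ⟨hp⟩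
  obtain ⟨P⟩ : Nonempty (Sylow p H) := inferInstance
  have hcyc : IsCyclic P := IsZGroup.isZGroup p hp P
  obtain ⟨g, hg⟩ := IsCyclic.exists_ofOrder_eq_natCard (α := P)
  have hdvd : p ^ k ∣ Nat.card P := by
    rw [P.card_eq_multiplicity]
    exact pow_dvd_pow p ((Nat.Prime.pow_dvd_iff_le_factorization hp
      Nat.card_pos.ne').mp hpk)
  have horder : orderOf (g : H) = Nat.card P := by
    rw [← hg]; exact Subgroup.orderOf_coe g
  calc p ^ k ∣ orderOf (g : H) := horder ▸ hdvd
    _ ∣ Monoid.exponent H := Monoid.order_dvd_exponent _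

/-- The cyclic graph of a group: vertices are the nonidentity elements,
two distinct vertices are adjacent iff they generate a cyclic subgroup. -/
def cyclicGraph (G : Type*) [Group G] : SimpleGraph {g : G // g ≠ 1} where
  Adj x y := x ≠ y ∧ IsCyclic (Subgroup.closure ({x.1, y.1} : Set G))
  symm := ⟨by
    rintro x y ⟨hne, hc⟩
    exact ⟨hne.symm, by rwa [Set.pair_comm]⟩⟩
  loopless := ⟨by rintro x ⟨hne, -⟩; exact hne rfl⟩

/-- A group is a Frobenius group if it has a nontrivial proper subgroup `H`
with `H ∩ H^g = 1` for every `g ∉ H`. -/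
def IsFrobenius (G : Type*) [Group G] : Prop :=
  ∃ H : Subgroup G, H ≠ ⊥ ∧ H ≠ ⊤ ∧
    ∀ g : G, g ∉ H → ∀ x : G, x ∈ H → g * x * g⁻¹ ∈ H → x = 1

/-- A group is generalized quaternion if it is isomorphic to `QuaternionGroup (2 ^ m)`
for some `m ≥ 1` (i.e. a generalized quaternion group of order `2 ^ (m + 2)`). -/
def IsGeneralizedQuaternion (P : Type*) [Group P] : Prop :=
  ∃ m : ℕ, 1 ≤ m ∧ Nonempty (P ≃* QuaternionGroup (2 ^ m))

/-- In a finite Z-group, two commuting elements generate a cyclic subgroup. -/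
lemma isCyclic_closure_pair {G : Type*} [Group G] [Finite G] (hZ : IsZGroup G)
    {a b : G} (hab : a * b = b * a) :
    IsCyclic (Subgroup.closure ({a, b} : Set G)) := by
  have hcomm : ∀ x ∈ ({a, b} : Set G), ∀ y ∈ ({a, b} : Set G), x * y = y * x := by
    rintro x (rfl | rfl) y (rfl | rfl) <;> first | rfl | exact hab | exact hab.symm
  letI : CommGroup (Subgroup.closure ({a, b} : Set G)) :=
    Subgroup.closureCommGroupOfComm hcomm
  exact isCyclic_of_comm_zgroup

theorem stmt_8 {G : Type*} [Group G] [Finite G] (hZ : IsZGroup G)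
    (hc : Subgroup.center G ≠ ⊥) :
    (cyclicGraph G).Connected ∧
      ∀ x y : {g : G // g ≠ 1}, (cyclicGraph G).dist x y ≤ 2 := by
  obtain ⟨⟨z, hzmem⟩, hzne⟩ := Subgroup.ne_bot_iff_exists_ne_one.mp hc
  have hz1 : z ≠ 1 := by simpa [Subtype.ext_iff] using hzne
  have hzc : ∀ a : G, z * a = a * z :=
    fun a => (Subgroup.mem_center_iff.mp hzmem a).symm
  set zv : {g : G // g ≠ 1} := ⟨z, hz1⟩ with hzv
  have adj_z : ∀ x : {g : G // g ≠ 1}, x ≠ zv → (cyclicGraph G).Adj x zv :=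
    fun x hx => ⟨hx, isCyclic_closure_pair hZ (hzc x.1).symm⟩
  have key : ∀ x y : {g : G // g ≠ 1},
      ∃ w : (cyclicGraph G).Walk x y, w.length ≤ 2 := by
    intro x y
    by_cases hxy : x = y
    · subst hxy; exact ⟨SimpleGraph.Walk.nil, by simp⟩
    by_cases hx : x = zv
    · subst hx
      refine ⟨((adj_z y (Ne.symm hxy)).symm).toWalk, by simp⟩
    by_cases hy : y = zv
    · subst hy
      exact ⟨(adj_z x hx).toWalk, by simp⟩
    · exact ⟨SimpleGraph.Walk.cons (adj_z x hx) ((adj_z y hy).symm).toWalk, by simp⟩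
  constructor
  · haveI : Nonempty {g : G // g ≠ 1} := ⟨zv⟩
    exact ⟨fun x y => ⟨(key x y).choose⟩⟩
  · intro x y
    obtain ⟨w, hw⟩ := key x y
    exact le_trans (SimpleGraph.dist_le w) hw
end

section
/- If G is a finite Z-group whose cyclic graph Δ(G) has diameter at most 2, then the center of G is nontrivial. -/
open Subgroup

universe u

section Helpers

variable {G : Type*} [Group G]

/-- elements of a cyclic subgroup commute -/
lemma comm_of_isCyclic {H : Subgroup G} (h : IsCyclic H) :
    ∀ x ∈ H, ∀ y ∈ H, Commute x y := by
  intro x hx y hy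
  obtain ⟨g, hg⟩ := h.exists_generator
  obtain ⟨i, hi⟩ := hg ⟨x, hx⟩
  obtain ⟨j, hj⟩ := hg ⟨y, hy⟩
  have hx' : x = ((g ^ i : H) : G) := congrArg Subtype.val hi.symm
  have hy' : y = ((g ^ j : H) : G) := congrArg Subtype.val hj.symm
  rw [hx', hy', SubgroupClass.coe_zpow, SubgroupClass.coe_zpow]
  exact (Commute.refl (g : G)).zpow_zpow i j

/-- A finite group with commuting elements and cyclic Sylow subgroups is cyclic. -/
lemma isCyclic_of_comm_zgroup_s9 {H : Type*} [Group H] [Finite H] (hz : IsZGroup H)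
    (hcomm : ∀ a b : H, a * b = b * a) : IsCyclic H := by
  letI : CommGroup H := { (inferInstance : Group H) with mul_comm := hcomm }
  have hcard : Nat.card H ∣ Monoid.exponent H := by
    have hc0 : Nat.card H ≠ 0 := Nat.card_pos.ne'
    have he0 : Monoid.exponent H ≠ 0 := Monoid.ExponentExists.of_finite.exponent_ne_zero
    rw [← Nat.factorization_le_iff_dvd hc0 he0]
    intro p
    rcases Nat.eq_zero_or_pos ((Nat.card H).factorization p) with h0 | hpos
    · simp [h0]
    have hp : p.Prime := Nat.prime_of_mem_primeFactors
      (Nat.support_factorization (Nat.card H) ▸ Finsupp.mem_support_iff.mpr hpos.ne')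
    haveI : Fact p.Prime := ⟨hp⟩
    obtain ⟨P⟩ : Nonempty (Sylow p H) := inferInstance
    have hcyc : IsCyclic P := hz.isZGroup p hp P
    obtain ⟨g, hg⟩ := hcyc.exists_generator
    have hord : orderOf g = Nat.card P := orderOf_eq_card_of_forall_mem_zpowers hg
    have hcardP : Nat.card P = p ^ (Nat.card H).factorization p := P.card_eq_multiplicity
    have : orderOf (g : H) = p ^ (Nat.card H).factorization p := by
      rw [← Subgroup.orderOf_coe] at hord
      rw [hord, hcardP]
    have hdvd : p ^ (Nat.card H).factorization p ∣ Monoid.exponent H :=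
      this ▸ Monoid.order_dvd_exponent (g : H)
    exact (Nat.Prime.pow_dvd_iff_le_factorization hp he0).mp hdvd
  have hexp : Monoid.exponent H ∣ Nat.card H := Group.exponent_dvd_nat_card
  have heq : Monoid.exponent H = Nat.card H := Nat.dvd_antisymm hexp hcard
  obtain ⟨g, hg⟩ := Monoid.exists_orderOf_eq_exponent (Monoid.ExponentExists.of_finite (G := H))
  have : orderOf g = Nat.card H := by rw [hg, heq]
  exact isCyclic_of_orderOf_eq_card g this

/-- p-group that is a Z-group is cyclic -/
lemma isCyclic_of_pgroup_zgroup {H : Type*} [Group H] [Finite H] {p : ℕ} [Fact p.Prime]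
    (hp : IsPGroup p H) (hz : IsZGroup H) : IsCyclic H := by
  have htop : IsPGroup p (⊤ : Subgroup H) := hp.to_subgroup ⊤
  obtain ⟨P, hP⟩ := htop.exists_le_sylow
  have hPt : (P : Subgroup H) = ⊤ := top_le_iff.mp hP
  have hcyc : IsCyclic P := hz.isZGroup p Fact.out P
  rw [hPt] at hcyc
  exact isCyclic_of_surjective _ Subgroup.topEquiv.surjective

/-- decomposition into coprime parts -/
lemma decomp_coprime [Finite G] (x : G) {n m : ℕ} (h : orderOf x = n * m) (hnm : n.Coprime m) :
    ∃ a b : G, x = a * b ∧ (∃ i : ℕ, a = x ^ i) ∧ (∃ j : ℕ, b = x ^ j) ∧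
      a ^ n = 1 ∧ b ^ m = 1 := by
  have hn0 : n ≠ 0 := by
    intro hn; rw [hn, zero_mul] at h; exact (orderOf_pos x).ne' h
  have hm0 : m ≠ 0 := by
    intro hm; rw [hm, mul_zero] at h; exact (orderOf_pos x).ne' h
  obtain ⟨u, hu⟩ : ∃ u : ℕ, m * u ≡ 1 [MOD n] := by
    rcases Nat.lt_or_ge n 2 with h1 | hlt
    · exact ⟨1, by interval_cases n <;> simp_all [Nat.ModEq, Nat.mod_one]⟩
    · obtain ⟨u, -, hu⟩ := Nat.exists_mul_mod_eq_one_of_coprime hnm.symm hlt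
      exact ⟨u, by rwa [Nat.ModEq, Nat.one_mod_eq_one.mpr (by omega)]⟩
  obtain ⟨v, hv⟩ : ∃ v : ℕ, n * v ≡ 1 [MOD m] := by
    rcases Nat.lt_or_ge m 2 with h1 | hlt
    · exact ⟨1, by interval_cases m <;> simp_all [Nat.ModEq, Nat.mod_one]⟩
    · obtain ⟨v, -, hv⟩ := Nat.exists_mul_mod_eq_one_of_coprime hnm hlt
      exact ⟨v, by rwa [Nat.ModEq, Nat.one_mod_eq_one.mpr (by omega)]⟩
  refine ⟨x ^ (m * u), x ^ (n * v), ?_, ⟨_, rfl⟩, ⟨_, rfl⟩, ?_, ?_⟩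
  · rw [← pow_add]
    nth_rewrite 1 [show x = x ^ 1 from (pow_one x).symm]
    rw [pow_eq_pow_iff_modEq, h]
    rw [← Nat.modEq_and_modEq_iff_modEq_mul hnm]
    constructor
    · have h1 : m * u + n * v ≡ 1 + 0 [MOD n] :=
        Nat.ModEq.add hu ((Nat.modEq_zero_iff_dvd).mpr (dvd_mul_right n v))
      simpa using h1.symm
    · have h1 : m * u + n * v ≡ 0 + 1 [MOD m] :=
        Nat.ModEq.add ((Nat.modEq_zero_iff_dvd).mpr (dvd_mul_right m u)) hv
      simpa using h1.symm
  · rw [← pow_mul, show m * u * n = (n * m) * u from by ring, pow_mul, ← h,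
      pow_orderOf_eq_one, one_pow]
  · rw [← pow_mul, show n * v * m = (n * m) * v from by ring, pow_mul, ← h,
      pow_orderOf_eq_one, one_pow]

end Helpers

section Star
variable {G : Type*} [Group G]

lemma commute_of_adj {x y : {g : G // g ≠ 1}} (h : (cyclicGraph G).Adj x y) :
    Commute x.1 y.1 := by
  refine comm_of_isCyclic h.2 x.1 ?_ y.1 ?_ <;>
    apply Subgroup.subset_closure <;> simp

lemma star_of_diam (hconn : (cyclicGraph G).Connected)
    (hdiam : ∀ x y : {g : G // g ≠ 1}, (cyclicGraph G).dist x y ≤ 2) :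
    ∀ x y : G, x ≠ 1 → y ≠ 1 → ∃ z : G, z ≠ 1 ∧ Commute z x ∧ Commute z y := by
  intro x y hx hy
  rcases eq_or_ne x y with rfl | hxy
  · exact ⟨x, hx, Commute.refl x, Commute.refl x⟩
  have vne : (⟨x, hx⟩ : {g : G // g ≠ 1}) ≠ ⟨y, hy⟩ := by
    simp [Subtype.ext_iff, hxy]
  obtain ⟨w, hw⟩ :=
    (hconn.preconnected ⟨x, hx⟩ ⟨y, hy⟩).exists_walk_length_eq_dist
  have hlen : w.length ≤ 2 := by rw [hw]; exact hdiam _ _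
  have h0 : w.getVert 0 = ⟨x, hx⟩ := w.getVert_zero
  have hL : w.getVert w.length = ⟨y, hy⟩ := w.getVert_length
  interval_cases hl : w.length
  · exact absurd (w.eq_of_length_eq_zero hl) vne
  · have hadj := w.adj_getVert_succ (i := 0) (by omega)
    norm_num [h0, hL] at hadj
    exact ⟨x, hx, Commute.refl x, commute_of_adj hadj⟩
  · have hadj1 := w.adj_getVert_succ (i := 0) (by omega)
    have hadj2 := w.adj_getVert_succ (i := 1) (by omega)
    norm_num [h0] at hadj1
    norm_num [hL] at hadj2
    exact ⟨(w.getVert 1).1, (w.getVert 1).2,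
      (commute_of_adj hadj1).symm, commute_of_adj hadj2⟩
end Star


section Sylow
variable {G : Type*} [Group G] [Finite G]

set_option maxHeartbeats 1000000 in
lemma sylow_normalizer_le_centralizer {p : ℕ} [Fact p.Prime]
    (P : Sylow p G) (hcyc : IsCyclic P)
    (hmin : ∀ r : ℕ, r.Prime → r ∣ Nat.card G → p ≤ r) :
    Subgroup.normalizer ((P : Subgroup G) : Set G) ≤ Subgroup.centralizer (P : Set G) := by
  have hp : p.Prime := Fact.out
  obtain ⟨x₀, hx₀⟩ := hcyc.exists_generator
  set X : G := (x₀ : G) with hX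
  have hXmem : X ∈ (P : Subgroup G) := x₀.2
  have hordX : orderOf X = Nat.card P := by
    rw [orderOf_coe, orderOf_eq_card_of_forall_mem_zpowers hx₀]
  set q : ℕ := Nat.card P with hq
  have hq0 : q ≠ 0 := Nat.card_pos.ne'
  have hPz : (P : Subgroup G) = zpowers X := by
    apply le_antisymm
    · intro y hy
      obtain ⟨i, hi⟩ := hx₀ ⟨y, hy⟩
      have hy' : y = ((x₀ ^ i : P) : G) := congrArg Subtype.val hi.symm
      rw [hy', SubgroupClass.coe_zpow]
      exact zpow_mem (mem_zpowers X) i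
    · rw [zpowers_le]; exact hXmem
  have hPpow : ∀ y ∈ (P : Subgroup G), ∃ k : ℕ, y = X ^ k := by
    intro y hy
    rw [hPz, ← mem_powers_iff_mem_zpowers] at hy
    obtain ⟨k, hk⟩ := hy
    exact ⟨k, hk.symm⟩
  -- a := multiplicity of p
  have hcardP : q = p ^ (Nat.card G).factorization p := P.card_eq_multiplicity
  -- core case: prime power order
  have core : ∀ r : ℕ, r.Prime → ∀ g ∈ Subgroup.normalizer ((P : Subgroup G) : Set G),
      (∃ k : ℕ, orderOf g = r ^ k) → Commute g X := by
    intro r hr g hg hko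
    obtain ⟨k, hk⟩ := hko
    rcases eq_or_ne r p with rfl | hrp
    · have hzp : IsPGroup r (zpowers g) := by
        apply IsPGroup.of_card
        rw [Nat.card_zpowers, hk]
      have hsup : IsPGroup r ((zpowers g ⊔ (P : Subgroup G)) : Subgroup G) :=
        IsPGroup.to_sup_of_normal_right' hzp P.2 (by rwa [zpowers_le])
      have hPeq : (zpowers g ⊔ (P : Subgroup G)) = P :=
        P.is_maximal' hsup le_sup_right
      have hgP : g ∈ (P : Subgroup G) := by
        rw [← hPeq]
        exact (le_sup_left : zpowers g ≤ _) (mem_zpowers g)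
      obtain ⟨i, hi⟩ := hPpow g hgP
      rw [hi]; exact (Commute.refl X).pow_left i
    · rcases eq_or_ne (orderOf g) 1 with h1 | h1
      · rw [orderOf_eq_one_iff] at h1; rw [h1]; exact Commute.one_left X
      have hdvd0 : orderOf g ∣ r ^ k := dvd_of_eq hk
      have hrdvd : r ∣ orderOf g := by
        rcases (Nat.dvd_prime_pow hr).mp hdvd0 with ⟨j, hj, hgj⟩
        rcases Nat.eq_zero_or_pos j with rfl | hjpos
        · rw [pow_zero] at hgj; exact absurd hgj h1
        · exact hgj ▸ dvd_pow_self r hjpos.ne'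
      have hrG : r ∣ Nat.card G := hrdvd.trans (orderOf_dvd_natCard g)
      have hpr : p < r := lt_of_le_of_ne (hmin r hr hrG) (Ne.symm hrp)
      have hconj : g * X * g⁻¹ ∈ (P : Subgroup G) := by
        rw [mem_normalizer_iff] at hg
        exact (hg X).mp hXmem
      obtain ⟨s, hs⟩ := hPpow _ hconj
      have hords : orderOf (X ^ s) = q := by
        rw [← hs, ← hordX]
        exact orderOf_injective (MulAut.conj g).toMonoidHom (MulAut.conj g).injective X
      have hcop : s.Coprime q := by
        rw [orderOf_pow, hordX] at hords
        have hgcd : Nat.gcd q s ∣ q := Nat.gcd_dvd_left q s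
        have : Nat.gcd q s = 1 := by
          rcases Nat.eq_zero_or_pos (Nat.gcd q s) with h0 | hpos
          · rw [h0] at hords; simp at hords; omega
          · by_contra hne
            have h2 : 2 ≤ Nat.gcd q s := by omega
            have := Nat.div_lt_self (Nat.pos_of_ne_zero hq0) h2
            omega
        exact Nat.Coprime.symm this
      -- iterate conjugation via MulAut
      have hiter : ∀ j : ℕ, (MulAut.conj g ^ j) X = X ^ s ^ j := by
        intro j
        induction j with
        | zero => simp
        | succ j ih =>
          rw [pow_succ', MulAut.mul_apply, ih, map_pow]
          have : (MulAut.conj g) X = X ^ s := by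
            simp [MulAut.conj_apply, ← hs]
          rw [this, ← pow_mul, pow_succ', pow_mul]
      have hone : (MulAut.conj g) ^ orderOf g = 1 := by
        rw [← map_pow, pow_orderOf_eq_one, map_one]
      have hXfix : X = X ^ s ^ r ^ k := by
        have := hiter (orderOf g)
        rw [hone] at this
        simpa [hk] using this
      -- pass to units of ZMod q
      have hmod : s ^ r ^ k ≡ 1 [MOD q] := by
        have : X ^ s ^ r ^ k = X ^ 1 := by rw [pow_one, ← hXfix]
        rw [pow_eq_pow_iff_modEq, hordX] at this
        exact this
      haveI : NeZero q := ⟨hq0⟩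
      set u : (ZMod q)ˣ := ZMod.unitOfCoprime s hcop
      have hu1 : u ^ r ^ k = 1 := by
        apply Units.ext
        push_cast [u, ZMod.coe_unitOfCoprime]
        rw [← Nat.cast_pow, show ((1 : ZMod q)) = ((1 : ℕ) : ZMod q) from by norm_num,
          ZMod.natCast_eq_natCast_iff]
        exact hmod
      have hordu_dvd : orderOf u ∣ r ^ k := orderOf_dvd_of_pow_eq_one hu1
      have hordu_card : orderOf u ∣ Nat.totient q := by
        have := orderOf_dvd_natCard u
        rwa [Nat.card_eq_fintype_card, ZMod.card_units_eq_totient] at this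
      -- q = p ^ a
      rcases Nat.eq_zero_or_pos ((Nat.card G).factorization p) with ha0 | hapos
      · have hq1 : q = 1 := by rw [hcardP, ha0, pow_zero]
        have hX1 : X = 1 := orderOf_eq_one_iff.mp (by rw [hordX, hq1])
        rw [hX1]; exact Commute.one_right g
      have htot : Nat.totient q = p ^ ((Nat.card G).factorization p - 1) * (p - 1) := by
        rw [hcardP, Nat.totient_prime_pow hp hapos]
      have hcop2 : (r ^ k).Coprime (Nat.totient q) := by
        rw [htot]
        apply Nat.Coprime.pow_left
        apply Nat.Coprime.mul_right
        · apply Nat.Coprime.pow_right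
          rw [Nat.coprime_primes hr hp]
          exact hrp
        · rw [hr.coprime_iff_not_dvd]
          intro hdvd
          have hple : r ≤ p - 1 := Nat.le_of_dvd (by have := hp.two_le; omega) hdvd
          have hp2 := hp.two_le
          omega
      have : orderOf u = 1 := Nat.dvd_one.mp (hcop2 ▸ Nat.dvd_gcd hordu_dvd hordu_card)
      have hu_eq : u = 1 := orderOf_eq_one_iff.mp this
      have hs1 : s ≡ 1 [MOD q] := by
        have : (s : ZMod q) = ((1 : ℕ) : ZMod q) := by
          have := congrArg Units.val hu_eq
          push_cast [u, ZMod.coe_unitOfCoprime] at this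
          simpa using this
        rwa [ZMod.natCast_eq_natCast_iff] at this
      have hXs : X ^ s = X := by
        have : X ^ s = X ^ 1 := by
          rw [pow_eq_pow_iff_modEq, hordX]; exact hs1
        simpa using this
      have : g * X * g⁻¹ = X := by rw [hs, hXs]
      have hcomm : g * X = X * g := by
        calc g * X = (g * X * g⁻¹) * g := by group
          _ = X * g := by rw [this]
      exact hcomm
  -- multi-prime: all elements of the normalizer commute with X
  have main : ∀ n : ℕ, ∀ g ∈ Subgroup.normalizer ((P : Subgroup G) : Set G), orderOf g = n → Commute g X := by
    intro n
    induction n using Nat.strong_induction_on with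
    | _ n ih =>
      intro g hg hord
      rcases eq_or_ne n 1 with rfl | hn1
      · rw [orderOf_eq_one_iff] at hord; rw [hord]; exact Commute.one_left X
      have hn0 : n ≠ 0 := by
        have := orderOf_pos g; omega
      set r := n.minFac with hr
      have hrprime : r.Prime := Nat.minFac_prime hn1
      have hfact : p ^ 0 = 1 := rfl
      have hsplit : n = p ^ 0 * n := by rw [hfact, one_mul]
      rcases eq_or_ne (ordCompl[r] n) 1 with hc1 | hc1
      · -- prime power
        apply core r hrprime g hg
        refine ⟨n.factorization r, ?_⟩
        rw [hord]
        have := Nat.ordProj_mul_ordCompl_eq_self n r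
        rw [hc1, mul_one] at this
        exact this.symm
      · have hsplit : orderOf g = r ^ n.factorization r * ordCompl[r] n := by
          rw [hord, Nat.ordProj_mul_ordCompl_eq_self]
        have hcop : (r ^ n.factorization r).Coprime (ordCompl[r] n) :=
          Nat.Coprime.pow_left _ (Nat.coprime_ordCompl hrprime hn0)
        obtain ⟨a, b, hab, ⟨i, hi⟩, ⟨j, hj⟩, ha, hb⟩ := decomp_coprime g hsplit hcop
        have haN : a ∈ Subgroup.normalizer ((P : Subgroup G) : Set G) := hi ▸ pow_mem hg i
        have hbN : b ∈ Subgroup.normalizer ((P : Subgroup G) : Set G) := hj ▸ pow_mem hg j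
        have hca : Commute a X := by
          apply core r hrprime a haN
          have : orderOf a ∣ r ^ n.factorization r := orderOf_dvd_of_pow_eq_one ha
          obtain ⟨k, _, hk⟩ := (Nat.dvd_prime_pow hrprime).mp this
          exact ⟨k, hk⟩
        have hcb : Commute b X := by
          have hbd : orderOf b ∣ ordCompl[r] n := orderOf_dvd_of_pow_eq_one hb
          have hlt : orderOf b < n := by
            have hrdvd : r ∣ n := Nat.minFac_dvd n
            have hfpos : 0 < n.factorization r :=
              Nat.Prime.factorization_pos_of_dvd hrprime hn0 hrdvd
            have h2r : 2 ≤ r ^ n.factorization r := by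
              calc 2 ≤ r := hrprime.two_le
                _ = r ^ 1 := (pow_one r).symm
                _ ≤ r ^ n.factorization r := Nat.pow_le_pow_right
                    (le_trans one_le_two hrprime.two_le) hfpos
            have hc0 : 0 < ordCompl[r] n := Nat.ordCompl_pos r hn0
            have hbb : orderOf b ≤ ordCompl[r] n := Nat.le_of_dvd hc0 hbd
            have heqn : r ^ n.factorization r * ordCompl[r] n = n :=
              Nat.ordProj_mul_ordCompl_eq_self n r
            nlinarith [hbb, hc0, h2r, heqn]

          exact ih (orderOf b) hlt b hbN rfl
        rw [hab]
        exact hca.mul_left hcb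
  -- conclude
  intro g hg
  rw [Subgroup.mem_centralizer_iff]
  intro y hy
  obtain ⟨k, hk⟩ := hPpow y hy
  have : Commute g X := main (orderOf g) g hg rfl
  rw [hk]
  exact ((this.pow_right k).symm).eq

set_option maxHeartbeats 800000 in
lemma burnside_package (hz : IsZGroup G) (hcard : Nat.card G ≠ 1) :
    ∃ K : Subgroup G, K.Normal ∧
      (∀ x : G, x ∈ K ↔ ¬ (Nat.card G).minFac ∣ orderOf x) ∧
      Nat.card K < Nat.card G ∧
      K.index = (Nat.card G).minFac ^ (Nat.card G).factorization (Nat.card G).minFac := by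
  have hc0 : Nat.card G ≠ 0 := Nat.card_pos.ne'
  set p := (Nat.card G).minFac with hpdef
  have hp : p.Prime := Nat.minFac_prime hcard
  haveI : Fact p.Prime := ⟨hp⟩
  obtain ⟨P⟩ : Nonempty (Sylow p G) := inferInstance
  have hcyc : IsCyclic P := hz.isZGroup p hp P
  have hP : Subgroup.normalizer ((P : Subgroup G) : Set G) ≤ Subgroup.centralizer (P : Set G) :=
    sylow_normalizer_le_centralizer P hcyc
      (fun r hr hdvd => Nat.minFac_le_of_dvd hr.two_le hdvd)
  set K : Subgroup G := (MonoidHom.transferSylow P hP).ker with hKdef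
  haveI hKn : K.Normal := hKdef ▸ (inferInstance : (MonoidHom.transferSylow P hP).ker.Normal)
  have hcompl : K.IsComplement' P := MonoidHom.ker_transferSylow_isComplement' P hP
  have hnotdvd : ¬ p ∣ Nat.card K := MonoidHom.not_dvd_card_ker_transferSylow P hP
  have hcardP : Nat.card P = p ^ (Nat.card G).factorization p := P.card_eq_multiplicity
  have hmul : Nat.card K * Nat.card P = Nat.card G := hcompl.card_mul
  have hKpos : 0 < Nat.card K := Nat.card_pos
  have hindex : K.index = Nat.card P := by
    have h1 : Nat.card K * K.index = Nat.card G := Subgroup.card_mul_index K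
    have := h1.trans hmul.symm
    exact Nat.eq_of_mul_eq_mul_left hKpos this
  have hmem : ∀ x : G, x ∈ K ↔ ¬ p ∣ orderOf x := by
    intro x
    constructor
    · intro hx hdvd
      have h1 : orderOf (⟨x, hx⟩ : K) ∣ Nat.card K := orderOf_dvd_natCard _
      rw [orderOf_mk] at h1
      exact hnotdvd (hdvd.trans h1)
    · intro hndvd
      have h1 : orderOf (QuotientGroup.mk' K x) ∣ orderOf x := orderOf_map_dvd _ x
      have h2 : orderOf (QuotientGroup.mk' K x) ∣ p ^ (Nat.card G).factorization p := by
        rw [← hcardP, ← hindex, Subgroup.index_eq_card]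
        exact orderOf_dvd_natCard _
      obtain ⟨j, hjle, hj⟩ := (Nat.dvd_prime_pow hp).mp h2
      rcases Nat.eq_zero_or_pos j with rfl | hjpos
      · rw [pow_zero] at hj
        have : QuotientGroup.mk' K x = 1 := orderOf_eq_one_iff.mp hj
        rwa [← QuotientGroup.ker_mk' K, MonoidHom.mem_ker]
      · exfalso
        exact hndvd ((hj ▸ dvd_pow_self p hjpos.ne').trans h1)
  have hcardlt : Nat.card K < Nat.card G := by
    have h2 : 2 ≤ Nat.card P := by
      have hfpos : 0 < (Nat.card G).factorization p :=
        hp.factorization_pos_of_dvd hc0 (Nat.minFac_dvd _)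
      calc 2 ≤ p := hp.two_le
        _ = p ^ 1 := (pow_one p).symm
        _ ≤ p ^ (Nat.card G).factorization p := Nat.pow_le_pow_right
            (le_trans one_le_two hp.two_le) hfpos
        _ = Nat.card P := hcardP.symm
    nlinarith [hmul, h2, hKpos]
  exact ⟨K, hKn, hmem, hcardlt, by rw [hindex, hcardP]⟩

/-- coprime action lemma: a p-element centralizing a self-centralizing normal subgroup
of a normal p'-subgroup centralizes the whole p'-subgroup. -/
lemma coprime_action_trivial {p : ℕ} (hp : p.Prime) {K M₀ : Subgroup G}
    (hM₀K : M₀ ≤ K) [K.Normal]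
    (hM₀n : ∀ k ∈ K, ∀ m ∈ M₀, k * m * k⁻¹ ∈ M₀)
    (hself : ∀ x ∈ K, (∀ m ∈ M₀, Commute x m) → x ∈ M₀)
    (hK' : ∀ x ∈ K, ¬ p ∣ orderOf x)
    (y : G) (hy : ∃ t : ℕ, orderOf y = p ^ t)
    (hyc : ∀ m ∈ M₀, Commute y m) :
    ∀ k ∈ K, Commute y k := by
  obtain ⟨t, ht⟩ := hy
  intro k hk
  have hyky : y * k * y⁻¹ ∈ K := Subgroup.Normal.conj_mem ‹K.Normal› k hk y
  set c : G := k⁻¹ * (y * k * y⁻¹) with hc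
  have hcK : c ∈ K := mul_mem (inv_mem hk) hyky
  have hcM₀ : c ∈ M₀ := by
    apply hself c hcK
    intro m hm
    have hkm : k * m * k⁻¹ ∈ M₀ := hM₀n k hk m hm
    have h1 : y * (k * m * k⁻¹) * y⁻¹ = k * m * k⁻¹ := by
      have := hyc _ hkm
      calc y * (k * m * k⁻¹) * y⁻¹ = (y * (k * m * k⁻¹)) * y⁻¹ := by group
        _ = ((k * m * k⁻¹) * y) * y⁻¹ := by rw [this.eq]
        _ = k * m * k⁻¹ := by group
    have h2 : y * m * y⁻¹ = m := by
      have := hyc m hm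
      calc y * m * y⁻¹ = (y * m) * y⁻¹ := by group
        _ = (m * y) * y⁻¹ := by rw [this.eq]
        _ = m := by group
    show c * m = m * c
    have key : (y * k * y⁻¹) * m * (y * k * y⁻¹)⁻¹ = k * m * k⁻¹ := by
      calc (y * k * y⁻¹) * m * (y * k * y⁻¹)⁻¹
          = y * k * (y⁻¹ * m * y) * k⁻¹ * y⁻¹ := by group
        _ = y * k * m * k⁻¹ * y⁻¹ := by
            have hmy : y⁻¹ * m * y = m := by
              conv_lhs => rw [← h2]
              group
            rw [hmy]
        _ = k * m * k⁻¹ := by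
            have : y * (k * m * k⁻¹) * y⁻¹ = k * m * k⁻¹ := h1
            calc y * k * m * k⁻¹ * y⁻¹ = y * (k * m * k⁻¹) * y⁻¹ := by group
              _ = k * m * k⁻¹ := h1
    calc c * m = k⁻¹ * ((y * k * y⁻¹) * m) := by rw [hc]; group
      _ = k⁻¹ * ((k * m * k⁻¹) * (y * k * y⁻¹)) := by
          rw [← key]; group
      _ = m * (k⁻¹ * (y * k * y⁻¹)) := by group
      _ = m * c := by rw [hc]
  -- iterate
  have hyc' : Commute y c := (hyc c hcM₀)
  have hiter : ∀ j : ℕ, y ^ j * k * y⁻¹ ^ j = k * c ^ j := by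
    intro j
    induction j with
    | zero => simp
    | succ j ih =>
      have hstep : y ^ (j+1) * k * y⁻¹ ^ (j+1) = y * (y ^ j * k * y⁻¹ ^ j) * y⁻¹ := by
        rw [pow_succ' y, pow_succ y⁻¹]; group
      rw [hstep, ih]
      have : y * (k * c ^ j) * y⁻¹ = (y * k * y⁻¹) * (y * c ^ j * y⁻¹) := by group
      rw [this]
      have h1 : y * k * y⁻¹ = k * c := by rw [hc]; group
      have h2 : y * c ^ j * y⁻¹ = c ^ j := by
        have := (hyc'.pow_right j)
        calc y * c ^ j * y⁻¹ = (y * c ^ j) * y⁻¹ := by group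
          _ = (c ^ j * y) * y⁻¹ := by rw [this.eq]
          _ = c ^ j := by group
      rw [h1, h2, pow_succ]
      group
  have hfin : k = k * c ^ orderOf y := by
    have := hiter (orderOf y)
    rw [pow_orderOf_eq_one, inv_pow, pow_orderOf_eq_one] at this
    simpa using this.symm
  have hc1 : c ^ orderOf y = 1 := by
    have := hfin
    replace this := mul_eq_left.mp this.symm
    exact this
  have hcord : orderOf c ∣ p ^ t := ht ▸ orderOf_dvd_of_pow_eq_one hc1
  have : orderOf c = 1 := by
    obtain ⟨j, hjle, hj⟩ := (Nat.dvd_prime_pow hp).mp hcord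
    rcases Nat.eq_zero_or_pos j with rfl | hjpos
    · rwa [pow_zero] at hj
    · exfalso
      exact hK' c hcK (hj ▸ dvd_pow_self p hjpos.ne')
  have hceq : c = 1 := orderOf_eq_one_iff.mp this
  have : y * k * y⁻¹ = k := by
    have : k⁻¹ * (y * k * y⁻¹) = 1 := hc ▸ hceq
    calc y * k * y⁻¹ = k * (k⁻¹ * (y * k * y⁻¹)) := by group
      _ = k * 1 := by rw [this]
      _ = k := mul_one k
  calc y * k = (y * k * y⁻¹) * y := by group
    _ = k * y := by rw [this]

end Sylow

section CharPlumbing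
variable {G : Type*} [Group G]

lemma orderOf_mulEquiv {H : Type*} [Group H] (φ : G ≃* H) (x : G) :
    orderOf (φ x) = orderOf x :=
  orderOf_injective φ.toMonoidHom φ.injective x

lemma char_map_of_char {K : Subgroup G} (hK : K.Characteristic)
    (M₀ : Subgroup ↥K) (hM₀ : M₀.Characteristic) : (M₀.map K.subtype).Characteristic := by
  rw [Subgroup.characteristic_iff_map_eq]
  intro φ
  have hKfix : K.map φ.toMonoidHom = K := Subgroup.characteristic_iff_map_eq.mp hK φ
  set ψ : ↥K ≃* ↥K := (φ.subgroupMap K).trans (MulEquiv.subgroupCongr hKfix) with hψ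
  have hψval : ∀ k : ↥K, ((ψ k : ↥K) : G) = φ (k : G) := fun k => rfl
  have hM₀fix : M₀.map ψ.toMonoidHom = M₀ := Subgroup.characteristic_iff_map_eq.mp hM₀ ψ
  ext x
  simp only [Subgroup.mem_map]
  constructor
  · rintro ⟨g, ⟨m, hm, rfl⟩, rfl⟩
    refine ⟨ψ m, ?_, (hψval m).symm⟩
    rw [← hM₀fix]
    exact ⟨m, hm, rfl⟩
  · rintro ⟨k, hk, rfl⟩
    rw [← hM₀fix] at hk
    obtain ⟨m, hm, rfl⟩ := hk
    exact ⟨(m : G), ⟨m, hm, rfl⟩, (hψval m).symm⟩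

lemma char_of_mem_iff_order {K : Subgroup G} (Pred : ℕ → Prop)
    (h : ∀ x : G, x ∈ K ↔ Pred (orderOf x)) : K.Characteristic := by
  rw [Subgroup.characteristic_iff_map_eq]
  intro φ
  ext x
  simp only [Subgroup.mem_map]
  constructor
  · rintro ⟨g, hg, rfl⟩
    rw [h] at hg ⊢
    rwa [show orderOf (φ.toMonoidHom g) = orderOf g from orderOf_mulEquiv φ g]
  · intro hx
    refine ⟨φ.symm x, ?_, by simp⟩
    rw [h] at hx ⊢
    rwa [orderOf_mulEquiv φ.symm]

end CharPlumbing

set_option maxHeartbeats 1600000 in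
lemma master : ∀ (n : ℕ) (G : Type u) [Group G] [Finite G], Nat.card G = n → IsZGroup G →
    ∃ M : Subgroup G, M.Characteristic ∧ IsCyclic M ∧
      Subgroup.centralizer (M : Set G) ≤ M := by
  intro n
  induction n using Nat.strong_induction_on with
  | _ n ih =>
    intro G _ _ hn hz
    haveI : IsZGroup G := hz
    by_cases habel : ∀ a b : G, a * b = b * a
    · haveI : IsCyclic G := isCyclic_of_comm_zgroup_s9 hz habel
      refine ⟨⊤, ?_, inferInstance, le_top⟩
      rw [Subgroup.characteristic_iff_map_eq]
      intro φ
      rw [← MonoidHom.range_eq_map]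
      exact φ.toMonoidHom.range_eq_top_of_surjective φ.surjective
    · -- nonabelian
      have hcard1 : Nat.card G ≠ 1 := by
        intro h1
        haveI : Subsingleton G := (Nat.card_eq_one_iff_unique.mp h1).1
        exact habel fun a b => Subsingleton.elim _ _
      set p := (Nat.card G).minFac with hpdef
      have hp : p.Prime := Nat.minFac_prime hcard1
      haveI : Fact p.Prime := ⟨hp⟩
      obtain ⟨K, hKn, hKmem, hKlt, hKindex⟩ := burnside_package hz hcard1
      haveI := hKn
      -- IH on K
      obtain ⟨M₀', hM₀'char, hM₀'cyc, hM₀'self⟩ :=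
        ih (Nat.card K) (hn ▸ hKlt) ↥K rfl inferInstance
      set M₀ : Subgroup G := M₀'.map K.subtype with hM₀def
      have hM₀K : M₀ ≤ K := Subgroup.map_subtype_le M₀'
      have hM₀char : M₀.Characteristic := by
        have hKchar : K.Characteristic :=
          char_of_mem_iff_order (fun d => ¬ p ∣ d) hKmem
        exact char_map_of_char hKchar M₀' hM₀'char
      have hM₀cyc : IsCyclic M₀ :=
        isCyclic_of_surjective _ (Subgroup.equivMapOfInjective M₀' K.subtype
          K.subtype_injective).surjective
      have hself : ∀ x ∈ K, (∀ m ∈ M₀, Commute x m) → x ∈ M₀ := by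
        intro x hx hcomm
        have : (⟨x, hx⟩ : ↥K) ∈ Subgroup.centralizer (M₀' : Set ↥K) := by
          rw [Subgroup.mem_centralizer_iff]
          intro h hh
          have : Commute x (h : G) := hcomm (h : G) ⟨h, hh, rfl⟩
          exact Subtype.ext this.symm.eq
        have hx' := hM₀'self this
        exact ⟨⟨x, hx⟩, hx', rfl⟩
      have hM₀n : ∀ k ∈ K, ∀ m ∈ M₀, k * m * k⁻¹ ∈ M₀ := by
        intro k hk m hm
        obtain ⟨m', hm', rfl⟩ := hm
        haveI : M₀'.Normal := Subgroup.normal_of_characteristic (H := M₀')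
        have : (⟨k, hk⟩ : ↥K) * m' * (⟨k, hk⟩ : ↥K)⁻¹ ∈ M₀' :=
          Subgroup.Normal.conj_mem ‹M₀'.Normal› m' hm' ⟨k, hk⟩
        exact ⟨_, this, rfl⟩
      have hK' : ∀ x ∈ K, ¬ p ∣ orderOf x := fun x hx => (hKmem x).mp hx
      -- C = centralizer of K, abelian
      set C : Subgroup G := Subgroup.centralizer (K : Set G) with hCdef
      -- quotient is cyclic p-group
      haveI hQcyc' : IsCyclic (G ⧸ K) := by
        apply isCyclic_of_pgroup_zgroup (p := p) _ inferInstance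
        apply IsPGroup.of_card
        rw [← Subgroup.index_eq_card, hKindex]
      have hCcomm : ∀ a b : ↥C, a * b = b * a := by
        apply commutative_of_cyclic_center_quotient
          ((QuotientGroup.mk' K).comp C.subtype)
        intro x hx
        rw [MonoidHom.mem_ker, MonoidHom.comp_apply, ← MonoidHom.mem_ker,
          QuotientGroup.ker_mk'] at hx
        rw [Subgroup.mem_center_iff]
        intro g
        exact Subtype.ext ((g.2 (x : G) hx).symm)
      -- Q = p-elements of C
      have hmulQ : ∀ {a b : G}, a ∈ C → b ∈ C →
          (∃ t, orderOf a = p ^ t) → (∃ t, orderOf b = p ^ t) →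
          (∃ t, orderOf (a * b) = p ^ t) := by
        rintro a b ha hb ⟨ta, hta⟩ ⟨tb, htb⟩
        have hcomm : Commute a b := congrArg Subtype.val (hCcomm ⟨a, ha⟩ ⟨b, hb⟩)
        have h1 : orderOf (a * b) ∣ p ^ ta * p ^ tb := by
          calc orderOf (a * b) ∣ Nat.lcm (orderOf a) (orderOf b) :=
                hcomm.orderOf_mul_dvd_lcm
            _ ∣ orderOf a * orderOf b := Nat.lcm_dvd_mul _ _
            _ = p ^ ta * p ^ tb := by rw [hta, htb]
        rw [← pow_add] at h1
        obtain ⟨t, _, ht⟩ := (Nat.dvd_prime_pow hp).mp h1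
        exact ⟨t, ht⟩
      set Q : Subgroup G :=
        { carrier := {x | x ∈ C ∧ ∃ t : ℕ, orderOf x = p ^ t}
          one_mem' := ⟨one_mem C, 0, by simp⟩
          mul_mem' := fun ha hb => ⟨mul_mem ha.1 hb.1, hmulQ ha.1 hb.1 ha.2 hb.2⟩
          inv_mem' := fun ha => ⟨inv_mem ha.1, by rw [orderOf_inv]; exact ha.2⟩ } with hQdef
      have hQmem : ∀ x : G, x ∈ Q ↔ x ∈ C ∧ ∃ t : ℕ, orderOf x = p ^ t := fun x => Iff.rfl
      have hQC : Q ≤ C := fun x hx => hx.1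
      have hQcyc : IsCyclic Q := by
        apply isCyclic_of_pgroup_zgroup (p := p) _ inferInstance
        intro q
        obtain ⟨t, ht⟩ := q.2.2
        refine ⟨t, ?_⟩
        have : orderOf q = p ^ t := by rw [← ht, orderOf_mk]
        rw [← this, pow_orderOf_eq_one]
      have hQchar : Q.Characteristic := by
        rw [Subgroup.characteristic_iff_map_eq]
        intro φ
        have hKchar : K.Characteristic :=
          char_of_mem_iff_order (fun d => ¬ p ∣ d) hKmem
        haveI := hKchar
        have hCfix : C.map φ.toMonoidHom = C :=
          Subgroup.characteristic_iff_map_eq.mp (Subgroup.characteristic_centralizer) φ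
        ext x
        simp only [Subgroup.mem_map]
        constructor
        · rintro ⟨g, hg, rfl⟩
          refine ⟨?_, ?_⟩
          · rw [← hCfix]; exact ⟨g, hg.1, rfl⟩
          · obtain ⟨t, ht⟩ := hg.2
            exact ⟨t, (orderOf_mulEquiv φ g).trans ht⟩
        · intro hx
          refine ⟨φ.symm x, ⟨?_, ?_⟩, by simp⟩
          · have : C.map φ.symm.toMonoidHom = C :=
              Subgroup.characteristic_iff_map_eq.mp (Subgroup.characteristic_centralizer) φ.symm
            rw [← this]; exact ⟨x, hx.1, rfl⟩
          · obtain ⟨t, ht⟩ := hx.2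
            exact ⟨t, by rwa [orderOf_mulEquiv φ.symm]⟩
      -- M = M₀ ⊔ Q
      refine ⟨M₀ ⊔ Q, ?_, ?_, ?_⟩
      · rw [Subgroup.characteristic_iff_map_eq]
        intro φ
        rw [Subgroup.map_sup, Subgroup.characteristic_iff_map_eq.mp hM₀char φ,
          Subgroup.characteristic_iff_map_eq.mp hQchar φ]
      · -- cyclic
        haveI := hM₀char
        have hrep : ∀ x ∈ M₀ ⊔ Q, ∃ m ∈ M₀, ∃ q ∈ Q, x = m * q := by
          intro x hx
          have : x ∈ (↑(M₀ ⊔ Q) : Set G) := hx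
          rw [sup_comm, Subgroup.mul_normal] at this
          obtain ⟨q, hq, m, hm, rfl⟩ := this
          -- q * m with q ∈ Q, m ∈ M₀; commute to reorder
          have hcomm : Commute q m := by
            have := (hQC hq) m (hM₀K hm)
            exact this.symm
          exact ⟨m, hm, q, hq, hcomm.eq⟩
        have hMcomm : ∀ x ∈ M₀ ⊔ Q, ∀ y ∈ M₀ ⊔ Q, Commute x y := by
          intro x hx y hy
          obtain ⟨m1, hm1, q1, hq1, rfl⟩ := hrep x hx
          obtain ⟨m2, hm2, q2, hq2, rfl⟩ := hrep y hy
          have cmm : Commute m1 m2 := comm_of_isCyclic hM₀cyc m1 hm1 m2 hm2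
          have cqq : Commute q1 q2 :=
            congrArg Subtype.val (hCcomm ⟨q1, hQC hq1⟩ ⟨q2, hQC hq2⟩)
          have cm1q2 : Commute m1 q2 := (hQC hq2) m1 (hM₀K hm1)
          have cm2q1 : Commute m2 q1 := (hQC hq1) m2 (hM₀K hm2)
          have c1 : Commute m1 (m2 * q2) := cmm.mul_right cm1q2
          have c2 : Commute q1 (m2 * q2) := cm2q1.symm.mul_right cqq
          exact c1.mul_left c2
        apply isCyclic_of_comm_zgroup_s9 inferInstance
        intro a b
        exact Subtype.ext (hMcomm a a.2 b b.2).eq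
      · -- self-centralizing
        intro y hy
        rw [Subgroup.mem_centralizer_iff] at hy
        have hyM₀ : ∀ m ∈ M₀, Commute y m := by
          intro m hm
          have h1 : Commute m y := hy m ((le_sup_left : M₀ ≤ M₀ ⊔ Q) hm)
          exact h1.symm
        have hyQ : ∀ q ∈ Q, Commute y q := by
          intro q hq
          have h1 : Commute q y := hy q ((le_sup_right : Q ≤ M₀ ⊔ Q) hq)
          exact h1.symm
        have hord0 : orderOf y ≠ 0 := (orderOf_pos y).ne'
        have hsplit : orderOf y = p ^ (orderOf y).factorization p * ordCompl[p] (orderOf y) :=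
          (Nat.ordProj_mul_ordCompl_eq_self (orderOf y) p).symm
        have hcop : (p ^ (orderOf y).factorization p).Coprime (ordCompl[p] (orderOf y)) :=
          Nat.Coprime.pow_left _ (Nat.coprime_ordCompl hp hord0)
        obtain ⟨a, b, hab, ⟨i, hi⟩, ⟨j, hj⟩, ha, hb⟩ := decomp_coprime y hsplit hcop
        have haM₀ : ∀ m ∈ M₀, Commute a m := fun m hm => hi ▸ (hyM₀ m hm).pow_left i
        have hbM₀ : ∀ m ∈ M₀, Commute b m := fun m hm => hj ▸ (hyM₀ m hm).pow_left j
        -- b is a p'-element, so b ∈ K, so b ∈ M₀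
        have hbK : b ∈ K := by
          rw [hKmem]
          intro hdvd
          have h1 : orderOf b ∣ ordCompl[p] (orderOf y) := orderOf_dvd_of_pow_eq_one hb
          exact Nat.not_dvd_ordCompl hp hord0 (hdvd.trans h1)
        have hbM : b ∈ M₀ := hself b hbK (hbM₀)
        -- a is a p-element centralizing M₀, so a ∈ C, so a ∈ Q
        have hap : ∃ t, orderOf a = p ^ t := by
          have h1 : orderOf a ∣ p ^ (orderOf y).factorization p :=
            orderOf_dvd_of_pow_eq_one ha
          obtain ⟨t, _, ht⟩ := (Nat.dvd_prime_pow hp).mp h1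
          exact ⟨t, ht⟩
        have haK : ∀ k ∈ K, Commute a k :=
          coprime_action_trivial hp hM₀K hM₀n hself hK' a hap haM₀
        have haC : a ∈ C := by
          rw [hCdef, Subgroup.mem_centralizer_iff]
          intro h hh
          exact (haK h hh).symm.eq
        have haQ : a ∈ Q := ⟨haC, hap⟩
        rw [hab]
        exact mul_mem ((le_sup_right : Q ≤ M₀ ⊔ Q) haQ)
          ((le_sup_left : M₀ ≤ M₀ ⊔ Q) hbM)

lemma mulAut_commute_of_isCyclic {H : Type*} [Group H] (hc : IsCyclic H)
    (σ τ : MulAut H) : Commute σ τ := by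
  obtain ⟨g, hg⟩ := hc.exists_generator
  obtain ⟨i, hi⟩ := hg (σ g)
  obtain ⟨j, hj⟩ := hg (τ g)
  have his : σ g = g ^ i := hi.symm
  have hjs : τ g = g ^ j := hj.symm
  have key : ∀ (ρ : MulAut H) (l : ℤ), ρ g = g ^ l → ∀ t : ℤ, ρ (g ^ t) = g ^ (l * t) := by
    intro ρ l hl t
    rw [map_zpow, hl, ← zpow_mul]
  apply MulEquiv.ext
  intro x
  obtain ⟨k, hk⟩ := hg x
  have hx : x = g ^ k := hk.symm
  rw [MulAut.mul_apply, MulAut.mul_apply, hx, key τ j hjs k, key σ i his (j * k),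
    key σ i his k, key τ j hjs (i * k), show i * (j * k) = j * (i * k) from by ring]

set_option maxHeartbeats 1000000 in
theorem stmt_9 {G : Type*} [Group G] [Finite G] (hZ : IsZGroup G)
    (hconn : (cyclicGraph G).Connected)
    (hdiam : ∀ x y : {g : G // g ≠ 1}, (cyclicGraph G).dist x y ≤ 2) :
    Subgroup.center G ≠ ⊥ := by
  intro hbot
  -- G is nontrivial
  obtain ⟨v⟩ := hconn.nonempty
  haveI : Nontrivial G := nontrivial_of_ne v.1 1 v.2
  have star := star_of_diam hconn hdiam
  obtain ⟨M, hMchar, hMcyc, hMself⟩ := master (Nat.card G) G rfl hZ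
  haveI := hMchar
  haveI : M.Normal := Subgroup.normal_of_characteristic M
  -- M ≠ ⊥
  have hMbot : M ≠ ⊥ := by
    intro h
    obtain ⟨x, hx⟩ := exists_ne (1 : G)
    have : x ∈ Subgroup.centralizer (M : Set G) := by
      rw [Subgroup.mem_centralizer_iff]
      intro h' hh'
      rw [h] at hh'
      rw [Subgroup.mem_bot.mp hh']
      simp
    have := hMself this
    rw [h, Subgroup.mem_bot] at this
    exact hx this
  obtain ⟨m₀, hm₀⟩ := hMcyc.exists_generator
  set m : G := (m₀ : G) with hmdef
  have hMz : ∀ h ∈ M, ∃ k : ℤ, h = m ^ k := by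
    intro h hh
    obtain ⟨k, hk⟩ := hm₀ ⟨h, hh⟩
    have hk' : h = ((m₀ ^ k : M) : G) := (congrArg Subtype.val hk).symm
    exact ⟨k, by rw [hk', SubgroupClass.coe_zpow]⟩
  have hmM : m ∈ M := m₀.2
  have hm1 : m ≠ 1 := by
    intro h
    apply hMbot
    rw [eq_bot_iff]
    intro x hx
    obtain ⟨k, hk⟩ := hMz x hx
    rw [Subgroup.mem_bot, hk, h, one_zpow]
  -- case M = ⊤ : G abelian, contradiction
  rcases eq_or_ne M ⊤ with hMtop | hMtop
  · obtain ⟨x, hx⟩ := exists_ne (1 : G)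
    have : x ∈ Subgroup.center G := by
      rw [Subgroup.mem_center_iff]
      intro g
      exact (comm_of_isCyclic hMcyc g (hMtop ▸ Subgroup.mem_top g) x
        (hMtop ▸ Subgroup.mem_top x)).eq
    rw [hbot, Subgroup.mem_bot] at this
    exact hx this
  -- commutators lie in M
  have hquot : ∀ x y : G, x * y * x⁻¹ * y⁻¹ ∈ M := by
    intro x y
    have hcomm : Commute (MulAut.conjNormal (H := M) x) (MulAut.conjNormal (H := M) y) :=
      mulAut_commute_of_isCyclic hMcyc _ _
    have hker : MulAut.conjNormal (H := M) (x * y * x⁻¹ * y⁻¹) = 1 := by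
      rw [map_mul, map_mul, map_mul, map_inv, map_inv]
      rw [hcomm.eq]
      group
    have hcent : x * y * x⁻¹ * y⁻¹ ∈ Subgroup.centralizer (M : Set G) := by
      rw [Subgroup.mem_centralizer_iff]
      intro h hh
      set c := x * y * x⁻¹ * y⁻¹ with hcdef
      have h1 : (MulAut.conjNormal (H := M) c) ⟨h, hh⟩ = ⟨h, hh⟩ := by rw [hker]; rfl
      have happ : c * h * c⁻¹ = h := by
        simpa using congrArg Subtype.val h1
      calc h * c = c * (c⁻¹ * h * c) := by group
        _ = c * h := by
            have : c⁻¹ * h * c = h := by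
              conv_lhs => rw [← happ]
              group
            rw [this]
    exact hMself hcent
  -- the quotient G/M is cyclic
  have habel : ∀ a b : G ⧸ M, a * b = b * a := by
    intro a b
    obtain ⟨x, rfl⟩ := QuotientGroup.mk'_surjective M a
    obtain ⟨y, rfl⟩ := QuotientGroup.mk'_surjective M b
    rw [← map_mul, ← map_mul]
    have : (QuotientGroup.mk' M) (x * y) = (QuotientGroup.mk' M) (y * x) := by
      rw [QuotientGroup.mk'_eq_mk']
      refine ⟨y⁻¹ * x⁻¹ * y * x, ?_, by group⟩
      have := hquot y⁻¹ x⁻¹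
      simpa using this
    exact this
  haveI : IsZGroup G := hZ
  haveI hQcyc : IsCyclic (G ⧸ M) := isCyclic_of_comm_zgroup_s9 inferInstance habel
  obtain ⟨c, hc⟩ := hQcyc.exists_generator
  obtain ⟨y, hy⟩ := QuotientGroup.mk'_surjective M c
  -- M ⊔ zpowers y = ⊤
  have htop : M ⊔ Subgroup.zpowers y = ⊤ := by
    rw [eq_top_iff]
    intro g _
    obtain ⟨k, hk⟩ := hc (QuotientGroup.mk' M g)
    have hk' : c ^ k = (QuotientGroup.mk' M) g := hk
    have hmk : (QuotientGroup.mk' M) (y ^ k) = (QuotientGroup.mk' M) g := by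
      rw [map_zpow, hy, hk']
    rw [QuotientGroup.mk'_eq_mk'] at hmk
    obtain ⟨z, hz, hzeq⟩ := hmk
    have : g = y ^ k * z := hzeq.symm
    rw [this]
    exact mul_mem ((le_sup_right : Subgroup.zpowers y ≤ _) (zpow_mem (mem_zpowers y) k))
      ((le_sup_left : M ≤ _) hz)
  have hy1 : y ≠ 1 := by
    intro h
    apply hMtop
    rw [eq_top_iff]
    intro g _
    have := htop
    rw [h] at this
    simp only [Subgroup.zpowers_one_eq_bot, sup_bot_eq] at this
    rw [this]; exact Subgroup.mem_top g
  -- apply the star property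
  obtain ⟨z, hz1, hzm, hzy⟩ := star m y hm1 hy1
  have hzM : z ∈ M := by
    apply hMself
    rw [Subgroup.mem_centralizer_iff]
    intro h hh
    obtain ⟨k, hk⟩ := hMz h hh
    rw [hk]
    exact ((hzm.zpow_right k).symm).eq
  have hzcen : z ∈ Subgroup.center G := by
    rw [Subgroup.mem_center_iff]
    intro g
    have hg : g ∈ M ⊔ Subgroup.zpowers y := htop ▸ Subgroup.mem_top g
    have hle : M ⊔ Subgroup.zpowers y ≤ Subgroup.centralizer ({z} : Set G) := by
      apply sup_le
      · intro h hh
        rw [Subgroup.mem_centralizer_iff]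
        intro w hw
        rw [Set.mem_singleton_iff.mp hw]
        exact (comm_of_isCyclic hMcyc z hzM h hh).eq
      · rw [Subgroup.zpowers_le]
        rw [Subgroup.mem_centralizer_iff]
        intro w hw
        rw [Set.mem_singleton_iff.mp hw]
        exact hzy.eq
    have := hle hg
    rw [Subgroup.mem_centralizer_iff] at this
    exact (this z (Set.mem_singleton z)).symm
  rw [hbot, Subgroup.mem_bot] at hzcen
  exact hz1 hzcen
end

section
/- If a finite group G has a central subgroup ⟨z⟩ of prime order p that is the unique subgroup of G of order p, then z is a dominating vertex of the cyclic graph Δ(G), i.e., ⟨z, g⟩ is cyclic for every g ∈ G. -/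
lemma zpowers_isCyclic' {G : Type*} [Group G] (a : G) : IsCyclic (Subgroup.zpowers a) := by
  refine ⟨⟨⟨a, Subgroup.mem_zpowers a⟩, ?_⟩⟩
  rintro ⟨x, k, rfl⟩
  exact ⟨k, by ext; simp⟩

lemma closure_pair_eq_zpowers' {G : Type*} [Group G] {z g : G} (h : z ∈ Subgroup.zpowers g) :
    Subgroup.closure ({z, g} : Set G) = Subgroup.zpowers g := by
  apply le_antisymm
  · rw [Subgroup.closure_le]
    rintro x (rfl | rfl)
    · exact h
    · exact Subgroup.mem_zpowers x
  · rw [Subgroup.zpowers_le]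
    exact Subgroup.subset_closure (by simp)

theorem stmt_11 {G : Type*} [Group G] [Finite G] (z : G) (p : ℕ) (hp : p.Prime)
    (hcen : Subgroup.zpowers z ≤ Subgroup.center G)
    (hord : Nat.card (Subgroup.zpowers z) = p)
    (huniq : ∀ Q : Subgroup G, Nat.card Q = p → Q = Subgroup.zpowers z) :
    ∀ g : G, IsCyclic (Subgroup.closure ({z, g} : Set G)) := by
  intro g
  have hordz : orderOf z = p := by rw [← Nat.card_zpowers]; exact hord
  by_cases hmem : z ∈ Subgroup.zpowers g
  · rw [closure_pair_eq_zpowers' hmem]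
    exact zpowers_isCyclic' g
  -- p does not divide orderOf g
  have hog : orderOf g ≠ 0 := (orderOf_pos g).ne'
  have hpdvd : ¬ p ∣ orderOf g := by
    intro hdvd
    have hy : orderOf (g ^ (orderOf g / p)) = p := orderOf_pow_orderOf_div hog hdvd
    have heq := huniq (Subgroup.zpowers (g ^ (orderOf g / p))) (by rw [Nat.card_zpowers, hy])
    have hz' : z ∈ Subgroup.zpowers (g ^ (orderOf g / p)) := heq ▸ Subgroup.mem_zpowers z
    exact hmem (Subgroup.zpowers_le.mpr ((Subgroup.zpowers g).pow_mem (Subgroup.mem_zpowers g) _) hz')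
  have hcop : Nat.Coprime p (orderOf g) := (Nat.Prime.coprime_iff_not_dvd hp).mpr hpdvd
  have hcomm : Commute z g := by
    have hz : z ∈ Subgroup.center G := hcen (Subgroup.mem_zpowers z)
    exact (Subgroup.mem_center_iff.mp hz g).symm
  -- z and g are both powers of z*g
  have key : ∀ a : ℕ, a ≡ 1 [MOD p] → orderOf g ∣ a → (z * g) ^ a = z := by
    intro a ha hb
    rw [hcomm.mul_pow, orderOf_dvd_iff_pow_eq_one.mp hb, mul_one]
    conv_rhs => rw [← pow_one z]
    rw [pow_eq_pow_iff_modEq, hordz]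
    exact ha
  have key2 : ∀ a : ℕ, a ≡ 1 [MOD orderOf g] → p ∣ a → (z * g) ^ a = g := by
    intro a ha hb
    rw [hcomm.mul_pow]
    have : z ^ a = 1 := orderOf_dvd_iff_pow_eq_one.mp (hordz ▸ hb)
    rw [this, one_mul]
    conv_rhs => rw [← pow_one g]
    rw [pow_eq_pow_iff_modEq]
    exact ha
  obtain ⟨k, hk1, hk2⟩ := Nat.chineseRemainder hcop 1 0
  obtain ⟨l, hl1, hl2⟩ := Nat.chineseRemainder hcop 0 1
  have hzmem : z ∈ Subgroup.zpowers (z * g) :=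
    ⟨(k : ℤ), by simpa using key k hk1 ((Nat.modEq_zero_iff_dvd).mp hk2)⟩
  have hgmem : g ∈ Subgroup.zpowers (z * g) :=
    ⟨(l : ℤ), by simpa using key2 l hl2 ((Nat.modEq_zero_iff_dvd).mp hl1)⟩
  have hcl : Subgroup.closure ({z, g} : Set G) = Subgroup.zpowers (z * g) := by
    apply le_antisymm
    · rw [Subgroup.closure_le]
      rintro x (rfl | rfl)
      · exact hzmem
      · exact hgmem
    · rw [Subgroup.zpowers_le]
      exact Subgroup.mul_mem _ (Subgroup.subset_closure (by simp)) (Subgroup.subset_closure (by simp))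
  rw [hcl]
  exact zpowers_isCyclic' (z * g)
end
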